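/- Let R be an algebra and α an automorphism of R, and let A = R[t, t⁻¹; α] be the Laurent Ore extension. Then Ω¹_R(A) ≅ A_α ⊗_R A as A-bimodules, via f ⊗ g ↦ f·(dt)·g, with inverse induced by the derivation D(r·tⁿ) = Σ_{k=0}^{n-1} r·t^k ⊗ t^{n-k-1} for n ≥ 0 and D(r·tⁿ) = -Σ_{k=1}^{|n|} r·t^{-k} ⊗ t^{n+k-1} for n < 0. -/

import Mathlib

set_option linter.unusedSectionVars false
set_option maxHeartbeats 1000000


universe u

/-- Integer powers of `t` in terms of `t` and its inverse `s`. -/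
def lpow {A : Type u} [Ring A] (t s : A) : ℤ → A :=
  fun n => if 0 ≤ n then t ^ n.toNat else s ^ (-n).toNat

/-- `A` (with embedding `ι`, invertible element `t` and its inverse `s`) is the
Laurent Ore extension `R[t, t⁻¹; α]`: the relation `t·r = α(r)·t` holds and every
element of `A` is uniquely a finite sum `∑_{i ∈ ℤ} ι(rᵢ)·tⁱ`. -/
structure IsLaurentOreExtension (k : Type u) [Field k] (R : Type u) [Ring R] [Algebra k R]
    (α : R → R) (A : Type u) [Ring A] [Algebra k A] (ι : R →ₐ[k] A) (t s : A) : Prop where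
  rel : ∀ r : R, t * ι r = ι (α r) * t
  mul_inv : t * s = 1
  inv_mul : s * t = 1
  repr : ∀ a : A, ∃! c : ℤ →₀ R, a = c.sum fun i r => ι r * lpow t s i

/-- `Ω` with `d : A → Ω` is the Cuntz–Quillen bimodule of relative differential
1-forms `Ω¹_R(A)`. -/
structure IsRelativeDifferentials (R A : Type u) [Ring R] [Ring A] (η : R →+* A)
    (Ω : Type u) [AddCommGroup Ω] [Module A Ω] [Module Aᵐᵒᵖ Ω] (d : A →+ Ω) : Prop where
  d_eta : ∀ r : R, d (η r) = 0
  leibniz : ∀ a b : A, d (a * b) = MulOpposite.op b • d a + a • d b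
  universal : ∀ (M : Type u) [AddCommGroup M] [Module A M] [Module Aᵐᵒᵖ M] (D : A →+ M),
      (∀ r : R, D (η r) = 0) →
      (∀ a b : A, D (a * b) = MulOpposite.op b • D a + a • D b) →
      ∃! φ : Ω →+ M, (∀ (a : A) (x : Ω), φ (a • x) = a • φ x) ∧
        (∀ (b : A) (x : Ω), φ (MulOpposite.op b • x) = MulOpposite.op b • φ x) ∧
        ∀ a : A, φ (d a) = D a

/-- `T` (with biadditive `τ`) is the twisted tensor product `A_α ⊗_R A`. -/
structure IsTwistedTensor (R A : Type u) [Ring R] [Ring A] (η : R →+* A) (α : R → R)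
    (T : Type u) [AddCommGroup T] (τ : A →+ A →+ T) : Prop where
  balanced : ∀ (f : A) (r : R) (g : A), τ (f * η (α r)) g = τ f (η r * g)
  universal : ∀ (C : Type u) [AddCommGroup C] (g' : A →+ A →+ C),
      (∀ (f : A) (r : R) (g : A), g' (f * η (α r)) g = g' f (η r * g)) →
      ∃! φ : T →+ C, ∀ f g : A, φ (τ f g) = g' f g


section Jsec
variable {T : Type u} [AddCommGroup T]

noncomputable def Jsum (h : ℤ → T) (a b : ℤ) : T :=
  (∑ i ∈ Finset.Ico a b, h i) - ∑ i ∈ Finset.Ico b a, h i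

lemma sum_Ico_cons (h : ℤ → T) {a b c : ℤ} (hab : a ≤ b) (hbc : b ≤ c) :
    (∑ i ∈ Finset.Ico a b, h i) + ∑ i ∈ Finset.Ico b c, h i = ∑ i ∈ Finset.Ico a c, h i := by
  rw [← Finset.sum_union (Finset.Ico_disjoint_Ico_consecutive a b c),
    Finset.Ico_union_Ico_eq_Ico hab hbc]

lemma Ico_singleton (x : ℤ) : Finset.Ico x (x+1) = {x} := by
  ext i; simp [Finset.mem_Ico]; omega

lemma Jsum_zero_sub (h : ℤ → T) (a b : ℤ) : Jsum h a b = Jsum h 0 b - Jsum h 0 a := by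
  have key : ∀ a b : ℤ, a ≤ b → Jsum h a b = Jsum h 0 b - Jsum h 0 a := by
    intro a b hab
    unfold Jsum
    rcases le_total 0 a with h0a | ha0
    · rw [Finset.Ico_eq_empty (show ¬ b < a by omega),
        Finset.Ico_eq_empty (show ¬ (a:ℤ) < 0 by omega),
        Finset.Ico_eq_empty (show ¬ (b:ℤ) < 0 by omega),
        ← sum_Ico_cons h h0a hab]
      simp
    · rcases le_total b 0 with hb0 | h0b
      · rw [Finset.Ico_eq_empty (show ¬ b < a by omega),
          Finset.Ico_eq_empty (show ¬ (0:ℤ) < a by omega),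
          Finset.Ico_eq_empty (show ¬ (0:ℤ) < b by omega),
          ← sum_Ico_cons h hab hb0]
        simp
      · rw [Finset.Ico_eq_empty (show ¬ b < a by omega),
          Finset.Ico_eq_empty (show ¬ (0:ℤ) < a by omega),
          Finset.Ico_eq_empty (show ¬ b < (0:ℤ) by omega),
          ← sum_Ico_cons h ha0 h0b]
        simp only [Finset.sum_empty]
        abel
  rcases le_total a b with hab | hba
  · exact key a b hab
  · have h1 : Jsum h a b = -Jsum h b a := by unfold Jsum; abel
    rw [h1, key b a hba]; abel

lemma Jsum_trans (h : ℤ → T) (a b c : ℤ) : Jsum h a b + Jsum h b c = Jsum h a c := by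
  rw [Jsum_zero_sub h a b, Jsum_zero_sub h b c, Jsum_zero_sub h a c]; abel

lemma Jsum_shift (h : ℤ → T) (c a b : ℤ) :
    Jsum (fun i => h (c + i)) a b = Jsum h (c + a) (c + b) := by
  unfold Jsum
  rw [Finset.sum_Ico_add h a b c, Finset.sum_Ico_add h b a c]
  simp [add_comm]

lemma Jsum_congr {h h' : ℤ → T} (a b : ℤ) (he : ∀ i, h i = h' i) : Jsum h a b = Jsum h' a b := by
  unfold Jsum
  rw [Finset.sum_congr rfl fun i _ => he i, Finset.sum_congr rfl fun i _ => he i]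

lemma Jsum_self (h : ℤ → T) (a : ℤ) : Jsum h a a = 0 := sub_self _

lemma Jsum_add (h h' : ℤ → T) (a b : ℤ) :
    Jsum (fun i => h i + h' i) a b = Jsum h a b + Jsum h' a b := by
  unfold Jsum
  rw [Finset.sum_add_distrib, Finset.sum_add_distrib]
  abel

lemma Jsum_zero_fun (a b : ℤ) : Jsum (fun _ => (0:T)) a b = 0 := by simp [Jsum]

lemma Jsum_smul {M : Type*} [Monoid M] [DistribMulAction M T] (m : M) (h : ℤ → T) (a b : ℤ) :
    m • Jsum h a b = Jsum (fun i => m • h i) a b := by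
  unfold Jsum
  rw [smul_sub, Finset.smul_sum, Finset.smul_sum]

lemma sum_range_up (f : ℤ → T) (a : ℤ) (N : ℕ) :
    ∑ j ∈ Finset.range N, f (a + j) = ∑ i ∈ Finset.Ico a (a + N), f i := by
  induction N with
  | zero => simp
  | succ N ih =>
    rw [Finset.sum_range_succ, ih]
    have h1 : (a + ((N:ℕ) + 1 : ℕ) : ℤ) = (a + N) + 1 := by push_cast; ring
    rw [h1, ← sum_Ico_cons f (by omega : a ≤ a + N) (by omega : (a:ℤ) + N ≤ a + N + 1),
      Ico_singleton, Finset.sum_singleton]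

lemma sum_range_down (f : ℤ → T) (a : ℤ) (N : ℕ) :
    ∑ j ∈ Finset.range N, f (a - 1 - j) = ∑ i ∈ Finset.Ico (a - N) a, f i := by
  induction N with
  | zero => simp
  | succ N ih =>
    rw [Finset.sum_range_succ, ih]
    have h1 : (a - ((N:ℕ)+1:ℕ) : ℤ) = a - (N+1) := by push_cast; ring
    have h2 : Finset.Ico (a - ((N:ℤ)+1)) (a - N) = {a - ((N:ℤ)+1)} := by
      have e : a - (N:ℤ) = (a - ((N:ℤ)+1)) + 1 := by ring
      rw [e, Ico_singleton]
    rw [h1, ← sum_Ico_cons f (by omega : a - ((N:ℤ)+1) ≤ a - N) (by omega : a - (N:ℤ) ≤ a), h2,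
      Finset.sum_singleton]
    have e2 : a - 1 - (N:ℤ) = a - ((N:ℤ)+1) := by ring
    rw [e2]; abel
end Jsec

section lpowsec
variable {A : Type u} [Ring A] {t s : A} (hts : t * s = 1) (hst : s * t = 1)

lemma lpow_eq_units (n : ℤ) :
    lpow t s n = ((⟨t, s, hts, hst⟩ : Aˣ) ^ n : Aˣ) := by
  unfold lpow
  rcases le_or_gt 0 n with h | h
  · lift n to ℕ using h
    rw [if_pos (by positivity)]
    simp [zpow_natCast]
  · obtain ⟨m, rfl⟩ : ∃ m : ℕ, n = -m := ⟨(-n).toNat, by omega⟩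
    rw [if_neg (by omega)]
    simp [zpow_neg, zpow_natCast, ← inv_pow]

include hts hst

lemma lpow_add (m n : ℤ) : lpow t s m * lpow t s n = lpow t s (m + n) := by
  rw [lpow_eq_units hts hst, lpow_eq_units hts hst, lpow_eq_units hts hst, ← Units.val_mul,
    ← zpow_add]

lemma lpow_zero' : lpow t s 0 = 1 := by simp [lpow]
lemma lpow_one' : lpow t s 1 = t := by simp [lpow]
lemma lpow_neg_one' : lpow t s (-1) = s := by norm_num [lpow]

lemma lpow_succ (n : ℤ) : lpow t s (n + 1) = lpow t s n * t := by
  rw [← lpow_add hts hst n 1, lpow_one' hts hst]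

lemma lpow_pred (n : ℤ) : lpow t s (n - 1) = lpow t s n * s := by
  rw [show n - 1 = n + (-1) by ring, ← lpow_add hts hst n (-1), lpow_neg_one' hts hst]
end lpowsec

section commsec
variable {k R A : Type u} [Field k] [Ring R] [Algebra k R] [Ring A] [Algebra k A]
  (α : R ≃ₐ[k] R) (ι : R →ₐ[k] A) {t s : A}
  (hts : t * s = 1) (hst : s * t = 1) (hrel : ∀ r : R, t * ι r = ι (α r) * t)

include hts hst hrel

lemma srel (r : R) : s * ι r = ι (α⁻¹ r) * s := by
  have h1 : t * ι (α⁻¹ r) = ι r * t := by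
    rw [hrel (α⁻¹ r)]
    exact congrArg (· * t) (congrArg ι (α.apply_symm_apply r))
  have h2 : s * (t * ι (α⁻¹ r)) * s = s * (ι r * t) * s := by rw [h1]
  rw [← mul_assoc, hst, one_mul, ← mul_assoc, mul_assoc (s * ι r) t s, hts, mul_one] at h2
  exact h2.symm

lemma lpow_comm (n : ℤ) (r : R) :
    lpow t s n * ι r = ι ((α ^ n) r) * lpow t s n := by
  induction n using Int.induction_on generalizing r with
  | zero => simp [lpow_zero' hts hst]
  | succ n ih =>
    rw [lpow_succ hts hst, mul_assoc, hrel, ← mul_assoc, ih (α r), mul_assoc,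
      ← lpow_succ hts hst]
    have : (α ^ (n:ℤ)) (α r) = (α ^ ((n:ℤ)+1)) r := by rw [zpow_add_one]; rfl
    rw [this]
  | pred n ih =>
    rw [show (-(n:ℤ) - 1) = (-(n:ℤ)) + (-1) by ring, ← lpow_add hts hst,
      lpow_neg_one' hts hst, mul_assoc, srel α ι hts hst hrel, ← mul_assoc, ih (α⁻¹ r),
      mul_assoc]
    have h3 : (α ^ (-(n:ℤ))) (α⁻¹ r) = (α ^ (-(n:ℤ) + -1)) r := by
      rw [show (-(n:ℤ) + -1) = (-(n:ℤ)) - 1 by ring, zpow_sub_one]; rfl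
    rw [h3]
end commsec

section alphasec
variable {k R : Type u} [Field k] [Ring R] [Algebra k R] (α : R ≃ₐ[k] R)

lemma alpha_pow_add (m n : ℤ) (r : R) : (α ^ m) ((α ^ n) r) = (α ^ (m + n)) r := by
  rw [zpow_add α m n]; rfl

lemma alpha_succ (q : ℤ) (x : R) : α ((α ^ q) x) = (α ^ (q + 1)) x := by
  rw [show q + 1 = 1 + q by ring, zpow_add α 1 q, zpow_one]; rfl
end alphasec

section Dsec
variable {k R A : Type u} [Field k] [Ring R] [Algebra k R] [Ring A] [Algebra k A]
  {T : Type u} [AddCommGroup T]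
  (α : R ≃ₐ[k] R) (ι : R →ₐ[k] A) (t s : A) (τ : A →+ A →+ T)

/-- The summand in the derivation formula. -/
def hfun (r : R) (c i : ℤ) : T := τ (ι r * lpow t s i) (lpow t s (c - 1 - i))

/-- Value of the derivation on the monomial `ι r * tⁿ`. -/
noncomputable def Dmon (r : R) (n : ℤ) : T := Jsum (fun i => hfun ι t s τ r n i) 0 n

lemma hfun_zero (c i : ℤ) : hfun ι t s τ 0 c i = 0 := by
  simp [hfun]

lemma hfun_add (r r' : R) (c i : ℤ) :
    hfun ι t s τ (r + r') c i = hfun ι t s τ r c i + hfun ι t s τ r' c i := by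
  unfold hfun
  rw [map_add, add_mul, map_add, AddMonoidHom.add_apply]

lemma Dmon_zero (n : ℤ) : Dmon ι t s τ 0 n = 0 := by
  unfold Dmon
  rw [Jsum_congr 0 n (fun i => hfun_zero ι t s τ n i), Jsum_zero_fun]

lemma Dmon_add (r r' : R) (n : ℤ) :
    Dmon ι t s τ (r + r') n = Dmon ι t s τ r n + Dmon ι t s τ r' n := by
  unfold Dmon
  rw [Jsum_congr 0 n (fun i => hfun_add ι t s τ r r' n i), Jsum_add]

variable (hA : IsLaurentOreExtension k R α A ι t s)

/-- Coefficients of an element of the Ore extension. -/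
noncomputable def coef (a : A) : ℤ →₀ R := (hA.repr a).choose

lemma coef_spec (a : A) : a = (coef α ι t s hA a).sum fun i r => ι r * lpow t s i :=
  (hA.repr a).choose_spec.1

lemma coef_uniq {a : A} {c : ℤ →₀ R} (h : a = c.sum fun i r => ι r * lpow t s i) :
    c = coef α ι t s hA a :=
  (hA.repr a).choose_spec.2 c h

lemma coef_add (a b : A) :
    coef α ι t s hA (a + b) = coef α ι t s hA a + coef α ι t s hA b := by
  refine (coef_uniq α ι t s hA ?_).symm
  rw [Finsupp.sum_add_index' (fun i => by simp) (fun i r1 r2 => by rw [map_add, add_mul])]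
  rw [← coef_spec α ι t s hA a, ← coef_spec α ι t s hA b]

lemma coef_mono (n : ℤ) (r : R) :
    coef α ι t s hA (ι r * lpow t s n) = Finsupp.single n r := by
  refine (coef_uniq α ι t s hA ?_).symm
  rw [Finsupp.sum_single_index (by simp)]

/-- The derivation `A → T`. -/
noncomputable def Dhom : A →+ T :=
  AddMonoidHom.mk' (fun a => (coef α ι t s hA a).sum fun n r => Dmon ι t s τ r n)
    (by
      intro a b
      show ((coef α ι t s hA (a + b)).sum fun n r => Dmon ι t s τ r n) = _
      rw [coef_add α ι t s hA a b,
        Finsupp.sum_add_index' (fun i => Dmon_zero ι t s τ i) (fun i r1 r2 => Dmon_add ι t s τ r1 r2 i)])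

lemma Dhom_mono (n : ℤ) (r : R) :
    Dhom α ι t s τ hA (ι r * lpow t s n) = Dmon ι t s τ r n := by
  show ((coef α ι t s hA (ι r * lpow t s n)).sum fun n r => Dmon ι t s τ r n) = _
  rw [coef_mono α ι t s hA n r, Finsupp.sum_single_index (Dmon_zero ι t s τ n)]

include hA in
lemma A_induction (P : A → Prop) (h0 : P 0) (hadd : ∀ x y, P x → P y → P (x + y))
    (hm : ∀ (n : ℤ) (r : R), P (ι r * lpow t s n)) : ∀ a, P a := by
  intro a
  obtain ⟨c, hc, -⟩ := hA.repr a
  rw [hc, Finsupp.sum]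
  exact Finset.sum_induction _ P hadd h0 (fun i _ => hm i (c i))
end Dsec

section pullsec
variable {k R A : Type u} [Field k] [Ring R] [Algebra k R] [Ring A] [Algebra k A]
  {T : Type u} [AddCommGroup T] [Module A T] [Module Aᵐᵒᵖ T]
  (α : R ≃ₐ[k] R) (ι : R →ₐ[k] A) {t s : A} (τ : A →+ A →+ T)
  (hts : t * s = 1) (hst : s * t = 1) (hrel : ∀ r : R, t * ι r = ι (α r) * t)
  (hbal : ∀ (f : A) (r : R) (g : A), τ (f * ι.toRingHom (α r)) g = τ f (ι.toRingHom r * g))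
  (hTl : ∀ (a f g : A), a • τ f g = τ (a * f) g)
  (hTr : ∀ (b f g : A), MulOpposite.op b • τ f g = τ f (g * b))

include hts hst hrel in
lemma mono_mul (r r' : R) (m p : ℤ) :
    (ι r * lpow t s m) * (ι r' * lpow t s p)
      = ι (r * (α ^ m) r') * lpow t s (m + p) := by
  rw [mul_assoc, ← mul_assoc (lpow t s m) (ι r'), lpow_comm α ι hts hst hrel m r',
    mul_assoc, lpow_add hts hst, ← mul_assoc, ← map_mul]

include hts hst hrel hbal hTr in
lemma pull (r r' : R) (n p q : ℤ) :
    MulOpposite.op (ι r' * lpow t s n) • τ (ι r * lpow t s p) (lpow t s q)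
      = τ (ι (r * (α ^ (p + q + 1)) r') * lpow t s p) (lpow t s (q + n)) := by
  rw [hTr, ← mul_assoc, lpow_comm α ι hts hst hrel q r', mul_assoc, lpow_add hts hst]
  have hb := hbal (ι r * lpow t s p) ((α ^ q) r') (lpow t s (q + n))
  rw [show ∀ x : R, ι.toRingHom x = ι x from fun _ => rfl,
    show ∀ x : R, ι.toRingHom x = ι x from fun _ => rfl] at hb
  rw [← hb]
  congr 1
  rw [alpha_succ α q r', mul_assoc, lpow_comm α ι hts hst hrel p, ← mul_assoc, ← map_mul,
    alpha_pow_add]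
  rw [show p + (q + 1) = p + q + 1 by ring]

include hts hst hrel hTl in
lemma push (r r' : R) (m p : ℤ) (g : A) :
    (ι r * lpow t s m) • τ (ι r' * lpow t s p) g
      = τ (ι (r * (α ^ m) r') * lpow t s (m + p)) g := by
  rw [hTl, mono_mul α ι hts hst hrel]

include hts hst hrel hbal hTl hTr in
lemma Dmul_mono (r r' : R) (m n : ℤ) :
    Dmon ι t s τ (r * (α ^ m) r') (m + n)
      = MulOpposite.op (ι r' * lpow t s n) • Dmon ι t s τ r m
        + (ι r * lpow t s m) • Dmon ι t s τ r' n := by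
  unfold Dmon
  rw [Jsum_smul, Jsum_smul]
  have e1 : ∀ i : ℤ, MulOpposite.op (ι r' * lpow t s n) • hfun ι t s τ r m i
      = hfun ι t s τ (r * (α ^ m) r') (m + n) i := by
    intro i
    unfold hfun
    have hp := pull α ι τ hts hst hrel hbal hTr r r' n i (m - 1 - i)
    rw [show i + (m - 1 - i) + 1 = m by ring, show m - 1 - i + n = m + n - 1 - i by ring] at hp
    exact hp
  have e2 : ∀ i : ℤ, (ι r * lpow t s m) • hfun ι t s τ r' n i
      = hfun ι t s τ (r * (α ^ m) r') (m + n) (m + i) := by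
    intro i
    unfold hfun
    rw [push α ι τ hts hst hrel hTl]
    rw [show m + n - 1 - (m + i) = n - 1 - i by ring]
  rw [Jsum_congr 0 m e1, Jsum_congr 0 n e2, Jsum_shift (fun i => hfun ι t s τ (r * (α ^ m) r') (m + n) i) m 0 n,
    add_zero, Jsum_trans]

variable (hA : IsLaurentOreExtension k R α A ι t s)

include hts hst hrel hbal hTl hTr hA in
lemma Dhom_leibniz (a b : A) : Dhom α ι t s τ hA (a * b)
    = MulOpposite.op b • Dhom α ι t s τ hA a + a • Dhom α ι t s τ hA b := by
  have step1 : ∀ (n : ℤ) (r' : R) (a : A), Dhom α ι t s τ hA (a * (ι r' * lpow t s n))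
      = MulOpposite.op (ι r' * lpow t s n) • Dhom α ι t s τ hA a
        + a • Dmon ι t s τ r' n := by
    intro n r'
    refine A_induction α ι t s hA _ ?_ ?_ ?_
    · simp
    · intro x y hx hy
      rw [add_mul, map_add, hx, hy, map_add, smul_add, add_smul]
      abel
    · intro m r
      rw [mono_mul α ι hts hst hrel, Dhom_mono, Dhom_mono]
      exact Dmul_mono α ι τ hts hst hrel hbal hTl hTr r r' m n
  have step2 : ∀ b a, Dhom α ι t s τ hA (a * b)
      = MulOpposite.op b • Dhom α ι t s τ hA a + a • Dhom α ι t s τ hA b := by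
    refine A_induction α ι t s hA
      (fun b => ∀ a, Dhom α ι t s τ hA (a * b)
        = MulOpposite.op b • Dhom α ι t s τ hA a + a • Dhom α ι t s τ hA b) ?_ ?_ ?_
    · intro a
      simp
    · intro x y hx hy a
      rw [mul_add, map_add, hx a, hy a, map_add, MulOpposite.op_add, add_smul, smul_add]
      abel
    · intro n r a
      rw [step1 n r a, Dhom_mono]
  exact step2 b a

include hts hst in
lemma Dhom_t : Dhom α ι t s τ hA t = τ 1 1 := by
  have h1 : ι (1:R) * lpow t s 1 = t := by rw [map_one, one_mul, lpow_one' hts hst]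
  have h2 := Dhom_mono α ι t s τ hA 1 (1:R)
  rw [h1] at h2
  rw [h2]
  unfold Dmon Jsum
  have hsing : Finset.Ico (0:ℤ) 1 = {0} := by
    have := Ico_singleton (0:ℤ); norm_num at this; exact this
  rw [Finset.Ico_eq_empty (show ¬ (1:ℤ) < 0 by omega), hsing, Finset.sum_singleton,
    Finset.sum_empty]
  unfold hfun
  rw [map_one, one_mul, lpow_zero' hts hst]
  norm_num [lpow_zero' hts hst]

include hts hst in
lemma Dhom_s : Dhom α ι t s τ hA s = -τ s s := by
  have h1 : ι (1:R) * lpow t s (-1) = s := by rw [map_one, one_mul, lpow_neg_one' hts hst]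
  have h2 := Dhom_mono α ι t s τ hA (-1) (1:R)
  rw [h1] at h2
  rw [h2]
  unfold Dmon Jsum
  have hsing : Finset.Ico (-1:ℤ) 0 = {-1} := by
    have := Ico_singleton (-1:ℤ); norm_num at this; exact this
  rw [Finset.Ico_eq_empty (show ¬ (0:ℤ) < -1 by omega), hsing, Finset.sum_singleton,
    Finset.sum_empty]
  unfold hfun
  norm_num [lpow_neg_one' hts hst, map_one]
end pullsec

/-- Let `A = R[t, t⁻¹; α]` be a Laurent Ore extension (`α` an automorphism).  Then
`Ω¹_R(A) ≅ A_α ⊗_R A` as `A`-bimodules, via `f ⊗ g ↦ f·(dt)·g`, with inverse induced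
by the derivation `D(r·tⁿ) = ∑_{k=0}^{n-1} r·t^k ⊗ t^{n-k-1}` for `n ≥ 0` and
`D(r·tⁿ) = -∑_{k=1}^{|n|} r·t^{-k} ⊗ t^{n+k-1}` for `n < 0`. -/
theorem omegaRel_of_laurentOreExtension
    {k R A : Type u} [Field k] [Ring R] [Algebra k R] [Ring A] [Algebra k A]
    (α : R ≃ₐ[k] R) (ι : R →ₐ[k] A) (t s : A)
    (hA : IsLaurentOreExtension k R α A ι t s)
    (Ω : Type u) [AddCommGroup Ω] [Module A Ω] [Module Aᵐᵒᵖ Ω] (d : A →+ Ω)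
    (hΩ : IsRelativeDifferentials R A ι.toRingHom Ω d)
    (T : Type u) [AddCommGroup T] [Module A T] [Module Aᵐᵒᵖ T] (τ : A →+ A →+ T)
    (hT : IsTwistedTensor R A ι.toRingHom α T τ)
    (hTl : ∀ (a f g : A), a • τ f g = τ (a * f) g)
    (hTr : ∀ (b f g : A), MulOpposite.op b • τ f g = τ f (g * b)) :
    ∃ ψ : T ≃+ Ω,
      (∀ (a : A) (x : T), ψ (a • x) = a • ψ x) ∧
      (∀ (b : A) (x : T), ψ (MulOpposite.op b • x) = MulOpposite.op b • ψ x) ∧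
      (∀ f g : A, ψ (τ f g) = MulOpposite.op g • (f • d t)) ∧
      ∀ (r : R) (n : ℤ), ψ.symm (d (ι r * lpow t s n)) =
        if 0 ≤ n then
          ∑ j ∈ Finset.range n.toNat, τ (ι r * lpow t s j) (lpow t s (n - j - 1))
        else
          -∑ j ∈ Finset.range (-n).toNat, τ (ι r * lpow t s (-(j + 1))) (lpow t s (n + j)) := by
  classical
  have hrel := hA.rel
  have hts := hA.mul_inv
  have hst := hA.inv_mul
  have hηι : ∀ r : R, ι.toRingHom r = ι r := fun _ => rfl
  have dι : ∀ r : R, d (ι r) = 0 := fun r => by have := hΩ.d_eta r; rwa [hηι] at this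
  have done1 : d (1 : A) = 0 := by
    have := dι 1; rwa [map_one] at this
  -- commutation identity in Ω
  have Ism : ∀ a c e : A, MulOpposite.op c • (a • d e) = a • (MulOpposite.op c • d e) := by
    intro a c e
    have h1 : a • d e = d (a * e) - MulOpposite.op e • d a := by rw [hΩ.leibniz a e]; abel
    have h2 : MulOpposite.op c • d e = d (e * c) - e • d c := by rw [hΩ.leibniz e c]; abel
    rw [h1, h2, smul_sub, smul_sub]
    have h3 : MulOpposite.op c • d (a * e) = d (a * e * c) - (a * e) • d c := by
      rw [hΩ.leibniz (a * e) c]; abel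
    have h4 : MulOpposite.op c • (MulOpposite.op e • d a) = MulOpposite.op (e * c) • d a := by
      rw [smul_smul, ← MulOpposite.op_mul]
    have h5 : a • d (e * c) = d (a * (e * c)) - MulOpposite.op (e * c) • d a := by
      rw [hΩ.leibniz a (e * c)]; abel
    rw [h3, h4, h5, mul_assoc, ← mul_smul a e (d c)]
    abel
  have twist : ∀ r : R, ι (α r) • d t = MulOpposite.op (ι r) • d t := by
    intro r
    have h1 : d (t * ι r) = MulOpposite.op (ι r) • d t := by
      rw [hΩ.leibniz, dι, smul_zero, add_zero]
    have h2 : d (ι (α r) * t) = ι (α r) • d t := by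
      rw [hΩ.leibniz, dι, smul_zero, zero_add]
    rw [← h1, ← h2, hrel]
  have ds_eq : d s = -(MulOpposite.op s • (s • d t)) := by
    have h0 : MulOpposite.op t • d s + s • d t = 0 := by
      rw [← hΩ.leibniz s t, hst, done1]
    have h1 : MulOpposite.op t • d s = -(s • d t) := by
      rw [add_eq_zero_iff_eq_neg] at h0; exact h0
    calc d s = MulOpposite.op s • (MulOpposite.op t • d s) := by
          rw [smul_smul, ← MulOpposite.op_mul, hts, MulOpposite.op_one, one_smul]
      _ = -(MulOpposite.op s • (s • d t)) := by rw [h1, smul_neg]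
  -- the map g0 and ψ₀
  let g0 : A →+ A →+ Ω := AddMonoidHom.mk'
    (fun f => AddMonoidHom.mk' (fun g => MulOpposite.op g • (f • d t))
      (fun g1 g2 => by
        show MulOpposite.op (g1 + g2) • (f • d t)
            = MulOpposite.op g1 • (f • d t) + MulOpposite.op g2 • (f • d t)
        rw [MulOpposite.op_add, add_smul]))
    (fun f1 f2 => AddMonoidHom.ext fun g => by
      show MulOpposite.op g • ((f1 + f2) • d t)
          = MulOpposite.op g • (f1 • d t) + MulOpposite.op g • (f2 • d t)
      rw [add_smul, smul_add])
  have hg0bal : ∀ (f : A) (r : R) (g : A),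
      g0 (f * ι.toRingHom (α r)) g = g0 f (ι.toRingHom r * g) := by
    intro f r g
    show MulOpposite.op g • ((f * ι (α r)) • d t) = MulOpposite.op (ι r * g) • (f • d t)
    rw [mul_smul, twist r, ← Ism f (ι r) t, smul_smul, ← MulOpposite.op_mul]
  obtain ⟨ψ₀, hψ₀, -⟩ := hT.universal Ω g0 hg0bal
  have hψτ : ∀ f g : A, ψ₀ (τ f g) = MulOpposite.op g • (f • d t) := hψ₀
  -- generation of T by pure tensors
  have Tgen : ∀ P : T → Prop, P 0 → (∀ x y, P x → P y → P (x + y)) → (∀ x, P x → P (-x)) →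
      (∀ f g : A, P (τ f g)) → ∀ x, P x := by
    intro P h0 hadd hneg hgen x
    have hmem : ∀ f g : A, τ f g ∈ AddSubgroup.closure (Set.range fun p : A × A => τ p.1 p.2) :=
      fun f g => AddSubgroup.subset_closure ⟨(f, g), rfl⟩
    let g' : A →+ A →+ ↥(AddSubgroup.closure (Set.range fun p : A × A => τ p.1 p.2)) :=
      AddMonoidHom.mk'
        (fun f => AddMonoidHom.mk' (fun g => ⟨τ f g, hmem f g⟩)
          (fun g1 g2 => Subtype.ext (map_add (τ f) g1 g2)))
        (fun f1 f2 => AddMonoidHom.ext fun g => Subtype.ext (by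
          show τ (f1 + f2) g = τ f1 g + τ f2 g
          rw [map_add]
          rfl))
    obtain ⟨φ', hφ', -⟩ := hT.universal (↥(AddSubgroup.closure (Set.range fun p : A × A => τ p.1 p.2)))
      g' (fun f r g => Subtype.ext (hT.balanced f r g))
    obtain ⟨φid, hφid, huniq⟩ := hT.universal T τ hT.balanced
    have h1 : (AddSubgroup.closure (Set.range fun p : A × A => τ p.1 p.2)).subtype.comp φ'
        = AddMonoidHom.id T := by
      have e1 : (AddSubgroup.closure (Set.range fun p : A × A => τ p.1 p.2)).subtype.comp φ' = φid :=
        huniq _ (fun f g => by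
          show ((φ' (τ f g) : T)) = τ f g
          rw [hφ' f g]
          rfl)
      have e2 : AddMonoidHom.id T = φid := huniq _ (fun f g => rfl)
      exact e1.trans e2.symm
    have hx : x ∈ AddSubgroup.closure (Set.range fun p : A × A => τ p.1 p.2) := by
      have := congrArg (fun F : T →+ T => F x) h1
      simp only [AddMonoidHom.comp_apply, AddMonoidHom.id_apply] at this
      rw [← this]
      exact (φ' x).2
    refine AddSubgroup.closure_induction ?_ h0 (fun a b _ _ ha hb => hadd a b ha hb)
      (fun a _ ha => hneg a ha) hx
    rintro y ⟨⟨f, g⟩, rfl⟩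
    exact hgen f g
  -- linearity of ψ₀
  have ψ₀l : ∀ (a : A) (x : T), ψ₀ (a • x) = a • ψ₀ x := by
    intro a
    refine Tgen (fun x => ψ₀ (a • x) = a • ψ₀ x) ?_ ?_ ?_ ?_
    · show ψ₀ (a • (0:T)) = a • ψ₀ 0
      rw [smul_zero, map_zero, smul_zero]
    · intro x y hx hy
      show ψ₀ (a • (x + y)) = a • ψ₀ (x + y)
      rw [smul_add, map_add, hx, hy, map_add, smul_add]
    · intro x hx
      show ψ₀ (a • (-x)) = a • ψ₀ (-x)
      rw [smul_neg, map_neg, hx, map_neg, smul_neg]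
    · intro f g
      show ψ₀ (a • τ f g) = a • ψ₀ (τ f g)
      rw [hTl, hψτ, hψτ, Ism (a * f) g t, mul_smul, ← Ism f g t]
  have ψ₀r : ∀ (b : A) (x : T), ψ₀ (MulOpposite.op b • x) = MulOpposite.op b • ψ₀ x := by
    intro b
    refine Tgen (fun x => ψ₀ (MulOpposite.op b • x) = MulOpposite.op b • ψ₀ x) ?_ ?_ ?_ ?_
    · show ψ₀ (MulOpposite.op b • (0:T)) = MulOpposite.op b • ψ₀ 0
      rw [smul_zero, map_zero, smul_zero]
    · intro x y hx hy
      show ψ₀ (MulOpposite.op b • (x + y)) = MulOpposite.op b • ψ₀ (x + y)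
      rw [smul_add, map_add, hx, hy, map_add, smul_add]
    · intro x hx
      show ψ₀ (MulOpposite.op b • (-x)) = MulOpposite.op b • ψ₀ (-x)
      rw [smul_neg, map_neg, hx, map_neg, smul_neg]
    · intro f g
      show ψ₀ (MulOpposite.op b • τ f g) = MulOpposite.op b • ψ₀ (τ f g)
      rw [hTr, hψτ, hψτ, MulOpposite.op_mul, mul_smul]
  -- the inverse φ
  obtain ⟨φ, ⟨φl, φr, φd⟩, -⟩ := hΩ.universal T (Dhom α ι t s τ hA)
    (fun r => by
      rw [hηι, show ι r = ι r * lpow t s 0 by rw [lpow_zero' hts hst, mul_one], Dhom_mono]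
      exact Jsum_self _ 0)
    (Dhom_leibniz α ι τ hts hst hrel hT.balanced hTl hTr hA)
  -- left inverse
  obtain ⟨φT, hφT, huniqT⟩ := hT.universal T τ hT.balanced
  have hcompT : φ.comp ψ₀ = AddMonoidHom.id T := by
    have e1 : φ.comp ψ₀ = φT := huniqT _ (fun f g => by
      show φ (ψ₀ (τ f g)) = τ f g
      rw [hψτ, φr, φl, φd, Dhom_t α ι τ hts hst hA, hTl, mul_one, hTr, one_mul])
    have e2 : AddMonoidHom.id T = φT := huniqT _ (fun f g => rfl)
    exact e1.trans e2.symm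
  have hlinv : ∀ x, φ (ψ₀ x) = x := by
    intro x
    have := congrArg (fun F : T →+ T => F x) hcompT
    simpa using this
  -- ψ₀ ∘ Dhom = d
  have ψD : ∀ a : A, ψ₀ (Dhom α ι t s τ hA a) = d a := by
    refine A_induction α ι t s hA _ ?_ ?_ ?_
    · rw [map_zero, map_zero, map_zero]
    · intro x y hx hy; rw [map_add, map_add, hx, hy, map_add]
    · intro n r
      induction n using Int.induction_on with
      | zero =>
        rw [Dhom_mono, show Dmon ι t s τ r 0 = 0 from Jsum_self _ 0, map_zero,
          lpow_zero' hts hst, mul_one, dι]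
      | succ n ih =>
        have key : ι r * lpow t s ((n:ℤ)+1) = (ι r * lpow t s (n:ℤ)) * t := by
          rw [mul_assoc, ← lpow_succ hts hst]
        rw [key, hΩ.leibniz, Dhom_leibniz α ι τ hts hst hrel hT.balanced hTl hTr hA, map_add,
          ψ₀r, ψ₀l, ih, Dhom_t α ι τ hts hst hA, hψτ, MulOpposite.op_one, one_smul, one_smul]
      | pred n ih =>
        have key : ι r * lpow t s (-(n:ℤ)-1) = (ι r * lpow t s (-(n:ℤ))) * s := by
          rw [mul_assoc, ← lpow_pred hts hst]
        rw [key, hΩ.leibniz, ds_eq, Dhom_leibniz α ι τ hts hst hrel hT.balanced hTl hTr hA,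
          map_add, ψ₀r, ψ₀l, ih, Dhom_s α ι τ hts hst hA, map_neg, hψτ]
  -- right inverse
  obtain ⟨φΩ, hφΩ, huniqΩ⟩ := hΩ.universal Ω d hΩ.d_eta hΩ.leibniz
  have hcompΩ : ψ₀.comp φ = AddMonoidHom.id Ω := by
    have e1 : ψ₀.comp φ = φΩ := huniqΩ _ ⟨fun a x => by
        show ψ₀ (φ (a • x)) = a • ψ₀ (φ x); rw [φl, ψ₀l],
      fun b x => by
        show ψ₀ (φ (MulOpposite.op b • x)) = MulOpposite.op b • ψ₀ (φ x); rw [φr, ψ₀r],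
      fun a => by
        show ψ₀ (φ (d a)) = d a; rw [φd, ψD a]⟩
    have e2 : AddMonoidHom.id Ω = φΩ := huniqΩ _ ⟨fun a x => rfl, fun b x => rfl, fun a => rfl⟩
    exact e1.trans e2.symm
  have hrinv : ∀ x, ψ₀ (φ x) = x := by
    intro x
    have := congrArg (fun F : Ω →+ Ω => F x) hcompΩ
    simpa using this
  refine ⟨{ toFun := ψ₀, invFun := φ, left_inv := hlinv, right_inv := hrinv,
            map_add' := map_add ψ₀ }, ψ₀l, ψ₀r, hψτ, ?_⟩
  intro r n
  show φ (d (ι r * lpow t s n)) = _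
  rw [φd, Dhom_mono]
  by_cases hn : 0 ≤ n
  · rw [if_pos hn]
    have hempty : Finset.Ico n (0:ℤ) = ∅ := Finset.Ico_eq_empty (by omega)
    have hup := sum_range_up (fun i => hfun ι t s τ r n i) 0 n.toNat
    simp only [zero_add] at hup
    rw [Int.toNat_of_nonneg hn] at hup
    show Jsum (fun i => hfun ι t s τ r n i) 0 n = _
    unfold Jsum
    rw [hempty, Finset.sum_empty, sub_zero, ← hup]
    refine Finset.sum_congr rfl fun j _ => ?_
    show τ (ι r * lpow t s (j:ℤ)) (lpow t s (n - 1 - (j:ℤ))) = _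
    rw [show n - 1 - (j:ℤ) = n - j - 1 by ring]
  · rw [if_neg hn]
    have hempty : Finset.Ico (0:ℤ) n = ∅ := Finset.Ico_eq_empty (by omega)
    have hdn := sum_range_down (fun i => hfun ι t s τ r n i) 0 (-n).toNat
    rw [show (0:ℤ) - ((-n).toNat : ℤ) = n by omega] at hdn
    show Jsum (fun i => hfun ι t s τ r n i) 0 n = _
    unfold Jsum
    rw [hempty, Finset.sum_empty, zero_sub, ← hdn]
    refine congrArg Neg.neg (Finset.sum_congr rfl fun j _ => ?_)
    show τ (ι r * lpow t s (0 - 1 - (j:ℤ))) (lpow t s (n - 1 - (0 - 1 - (j:ℤ)))) = _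
    rw [show n - 1 - ((0:ℤ) - 1 - (j:ℤ)) = n + j by ring,
      show (0:ℤ) - 1 - (j:ℤ) = -((j:ℤ)+1) by ring]
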